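/- arXiv:math/0404558 — 2 statements merged into one kernel-verified Lean document; each statement's English description precedes it below -/
import Mathlib

section
/- For α > 1 and real u > 0, v > 0, h > 0: ∫_0^∞ x^{h-1} exp(-u x^α - v x) dx = (1/α) ∑_{n=0}^∞ ((-1)^n / n!) Γ((h+n)/α) v^n u^{-(h+n)/α}. -/
open MeasureTheory Real

lemma real_exp_tsum' (x : ℝ) : Real.exp x = ∑' n : ℕ, x ^ n / n.factorial := by
  rw [Real.exp_eq_exp_ℝ, NormedSpace.exp_eq_tsum_div]

set_option maxHeartbeats 1000000 in
set_option maxRecDepth 8000 in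
/-- Lemma 1.2 for `α > 1`:
`∫_0^∞ x^{h-1} exp(-u x^α - v x) dx = (1/α) ∑ ((-1)^n/n!) Γ((h+n)/α) v^n u^{-(h+n)/α}`. -/
theorem stmt_3 (α u v h : ℝ) (hα : 1 < α) (hu : 0 < u) (hv : 0 < v) (hh : 0 < h) :
    ∫ x in Set.Ioi (0 : ℝ), x ^ (h - 1) * Real.exp (-u * x ^ α - v * x)
      = (1 / α) *
        ∑' n : ℕ, ((-1 : ℝ) ^ n / (n.factorial : ℝ)) * Real.Gamma ((h + n) / α)
          * v ^ n * u ^ (-((h + n) / α)) := by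
  have hα0 : (0:ℝ) < α := by linarith
  set F : ℕ → ℝ → ℝ := fun n x =>
    ((-v) ^ n / n.factorial) * (x ^ (h + n - 1) * Real.exp (-u * x ^ α)) with hF
  have hq : ∀ n : ℕ, (-1 : ℝ) < h + n - 1 := fun n => by
    have : (0:ℝ) ≤ n := Nat.cast_nonneg n
    linarith
  have hInt : ∀ n : ℕ, IntegrableOn (F n) (Set.Ioi 0) :=
    fun n => (integrableOn_rpow_mul_exp_neg_mul_rpow (hq n) hα0 hu).const_mul _
  have hxpow : ∀ (n : ℕ) (x : ℝ), 0 < x → x ^ (h + n - 1) = x ^ (h - 1) * x ^ (n : ℕ) := by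
    intro n x hx
    rw [← Real.rpow_natCast x n, ← Real.rpow_add hx]
    ring_nf
  have hnorm : ∀ (n : ℕ) (x : ℝ), 0 < x →
      ‖F n x‖ = (v * x) ^ n / n.factorial * (x ^ (h - 1) * Real.exp (-u * x ^ α)) := by
    intro n x hx
    rw [hF]
    simp only [norm_mul, norm_div, norm_pow, norm_neg, Real.norm_eq_abs,
      abs_of_pos hv, abs_of_nonneg (Real.exp_pos _).le,
      abs_of_pos (Real.rpow_pos_of_pos hx _), abs_of_pos hx, Nat.abs_cast, hxpow n x hx, mul_pow]
    ring
  have hsummable : ∀ x : ℝ, 0 < x → Summable (fun n => ‖F n x‖) := by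
    intro x hx
    apply Summable.congr ((Real.summable_pow_div_factorial (v * x)).mul_right
      (x ^ (h - 1) * Real.exp (-u * x ^ α)))
    intro n
    exact (hnorm n x hx).symm
  have hsum_norm : ∀ x : ℝ, 0 < x →
      ∑' n : ℕ, ‖F n x‖ = Real.exp (v * x) * (x ^ (h - 1) * Real.exp (-u * x ^ α)) := by
    intro x hx
    rw [tsum_congr (fun n => hnorm n x hx), tsum_mul_right, ← real_exp_tsum']
  -- integrable majorant
  set g : ℝ → ℝ := fun x => Real.exp (v * x) * (x ^ (h - 1) * Real.exp (-u * x ^ α)) with hg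
  have hgmeas : AEStronglyMeasurable g (volume.restrict (Set.Ioi (0:ℝ))) := by
    apply AEStronglyMeasurable.mul
    · exact ((Real.continuous_exp.comp (continuous_const.mul continuous_id)).aestronglyMeasurable)
    · exact (integrableOn_rpow_mul_exp_neg_mul_rpow
        (show (-1:ℝ) < h - 1 by linarith) hα0 hu).aestronglyMeasurable
  have hmaj : IntegrableOn g (Set.Ioi 0) := by
    obtain ⟨R, hR⟩ := (Filter.eventually_atTop).mp
      ((tendsto_rpow_atTop (show (0:ℝ) < α - 1 by linarith)).eventually_ge_atTop (2 * v / u))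
    set R0 : ℝ := max R 0 with hR0
    have hB : IntegrableOn
        (fun x : ℝ => Real.exp (v * R0) * (x ^ (h - 1) * Real.exp (-(u/2) * x ^ α)))
        (Set.Ioi 0) :=
      (integrableOn_rpow_mul_exp_neg_mul_rpow (show (-1:ℝ) < h - 1 by linarith)
        hα0 (half_pos hu)).const_mul _
    refine hB.mono' hgmeas ?_
    rw [ae_restrict_iff' measurableSet_Ioi]
    refine Filter.Eventually.of_forall (fun x hx => ?_)
    have hx0 : (0:ℝ) < x := hx
    have hgpos : 0 ≤ g x :=
      mul_nonneg (Real.exp_pos _).le (mul_nonneg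
        (Real.rpow_nonneg hx0.le _) (Real.exp_pos _).le)
    rw [Real.norm_eq_abs, abs_of_nonneg hgpos, hg]
    have hxa : (0:ℝ) ≤ x ^ α := (Real.rpow_pos_of_pos hx0 α).le
    have hkey : Real.exp (v * x) * Real.exp (-u * x ^ α)
        ≤ Real.exp (v * R0) * Real.exp (-(u/2) * x ^ α) := by
      rw [← Real.exp_add, ← Real.exp_add]
      apply Real.exp_le_exp.mpr
      rcases le_total x R0 with hcase | hcase
      · have h1 : v * x ≤ v * R0 := mul_le_mul_of_nonneg_left hcase hv.le
        nlinarith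
      · have hRx : R ≤ x := le_trans (le_max_left R 0) hcase
        have h2 : 2 * v / u ≤ x ^ (α - 1) := hR x hRx
        have h3 : v * x ≤ u / 2 * x ^ α := by
          have h4 : (2 * v / u) * ((u/2) * x) ≤ x ^ (α - 1) * ((u/2) * x) := by
            apply mul_le_mul_of_nonneg_right h2
            positivity
          have h5 : x ^ (α - 1) * x = x ^ α := by
            rw [← Real.rpow_add_one hx0.ne', sub_add_cancel]
          calc v * x = (2 * v / u) * ((u/2) * x) := by field_simp
            _ ≤ x ^ (α - 1) * ((u/2) * x) := h4
            _ = u / 2 * x ^ α := by rw [← h5]; ring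
        have h6 : 0 ≤ v * R0 := mul_nonneg hv.le (le_max_right R 0)
        nlinarith
    calc Real.exp (v * x) * (x ^ (h - 1) * Real.exp (-u * x ^ α))
        = (Real.exp (v * x) * Real.exp (-u * x ^ α)) * x ^ (h - 1) := by ring
      _ ≤ (Real.exp (v * R0) * Real.exp (-(u/2) * x ^ α)) * x ^ (h - 1) := by
          apply mul_le_mul_of_nonneg_right hkey (Real.rpow_pos_of_pos hx0 _).le
      _ = Real.exp (v * R0) * (x ^ (h - 1) * Real.exp (-(u/2) * x ^ α)) := by ring
  -- finiteness of sum of lintegrals of norms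
  have key : ∑' n : ℕ, ∫⁻ x, ‖F n x‖₊ ∂(volume.restrict (Set.Ioi 0)) ≠ ⊤ := by
    rw [← lintegral_tsum (fun n => (hInt n).aestronglyMeasurable.nnnorm.aemeasurable.coe_nnreal_ennreal)]
    have hcong : ∀ᵐ x ∂(volume.restrict (Set.Ioi (0:ℝ))),
        ∑' n : ℕ, (‖F n x‖₊ : ENNReal) = ENNReal.ofReal (g x) := by
      filter_upwards [ae_restrict_mem measurableSet_Ioi] with x hx
      simp only [hg]
      rw [← hsum_norm x hx,
        ENNReal.ofReal_tsum_of_nonneg (fun n => norm_nonneg _) (hsummable x hx)]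
      exact tsum_congr fun n => (ofReal_norm _).symm
    rw [lintegral_congr_ae hcong]
    have hfin := hmaj.hasFiniteIntegral
    rw [hasFiniteIntegral_iff_ofReal ((ae_restrict_iff' measurableSet_Ioi).mpr
      (Filter.Eventually.of_forall (fun x hx => by
        simp only [hg]
        exact mul_nonneg (Real.exp_pos _).le (mul_nonneg
          (Real.rpow_nonneg (le_of_lt hx) _) (Real.exp_pos _).le))))] at hfin
    exact hfin.ne
  have hswap := integral_tsum (fun n => (hInt n).aestronglyMeasurable) key
  -- pointwise identification of the sum
  have hpt : ∀ x ∈ Set.Ioi (0:ℝ),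
      x ^ (h - 1) * Real.exp (-u * x ^ α - v * x) = ∑' n : ℕ, F n x := by
    intro x hx
    have hx0 : (0:ℝ) < x := hx
    have hterm : ∀ n : ℕ, F n x
        = (-(v * x)) ^ n / n.factorial * (x ^ (h - 1) * Real.exp (-u * x ^ α)) := by
      intro n
      simp only [hF, hxpow n x hx0]
      rw [neg_pow (v*x) n, neg_pow v n, mul_pow]
      ring
    rw [tsum_congr hterm, tsum_mul_right, ← real_exp_tsum',
      show -u * x ^ α - v * x = -u * x ^ α + -(v * x) by ring, Real.exp_add]
    ring
  rw [setIntegral_congr_fun measurableSet_Ioi hpt, hswap]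
  -- evaluate each integral
  have hval : ∀ n : ℕ, ∫ x in Set.Ioi (0:ℝ), F n x
      = ((-v) ^ n / n.factorial) *
          (u ^ (-(h + n) / α) * (1 / α) * Real.Gamma ((h + n) / α)) := by
    intro n
    rw [hF]
    simp only []
    rw [integral_const_mul, integral_rpow_mul_exp_neg_mul_rpow hα0 (hq n) hu,
      show h + (n:ℝ) - 1 + 1 = h + n by ring]
  rw [tsum_congr hval, ← tsum_mul_left]
  refine tsum_congr fun n => ?_
  rw [neg_pow v n, neg_div]
  ring
end

section
/- For 0 < α < 1 and x > 0, the Laplace transform of Ψ_{α,β,y}(x) = x^{β-1} e^{-y x^α} (β > 0, y > 0) at ξ > 0 equals ξ^{-β} 𝕃_{α,β}(y/ξ^α), where 𝕃_{α,β}(z) = ∑_{n=0}^∞ ((-1)^n Γ(αn+β)/n!) z^n; i.e., ∫_0^∞ x^{β-1} exp(-y x^α - ξ x) dx = ξ^{-β} ∑_{n=0}^∞ ((-1)^n Γ(αn+β)/n!) (y/ξ^α)^n. -/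
open MeasureTheory Real Filter

lemma gamma_add_le {a s : ℝ} (ha0 : 0 < a) (ha1 : a < 1) (hs : 0 < s) :
    Real.Gamma (s + a) ≤ Real.Gamma s * s ^ a := by
  have h1 : (0:ℝ) ≤ 1 - a := by linarith
  have hmem : s ∈ Set.Ioi (0:ℝ) := hs
  have hmem1 : s + 1 ∈ Set.Ioi (0:ℝ) := by simp only [Set.mem_Ioi]; linarith
  have hcv := Real.convexOn_log_Gamma.2 hmem hmem1 h1 ha0.le (by ring)
  simp only [smul_eq_mul, Function.comp_apply] at hcv
  have hpt : (1 - a) * s + a * (s + 1) = s + a := by ring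
  rw [hpt] at hcv
  have hΓs : 0 < Real.Gamma s := Real.Gamma_pos_of_pos hs
  have hΓs1 : Real.Gamma (s + 1) = s * Real.Gamma s := Real.Gamma_add_one hs.ne'
  have hΓsa : 0 < Real.Gamma (s + a) := Real.Gamma_pos_of_pos (by linarith)
  calc Real.Gamma (s + a) = Real.exp (Real.log (Real.Gamma (s + a))) := (Real.exp_log hΓsa).symm
    _ ≤ Real.exp ((1 - a) * Real.log (Real.Gamma s) + a * Real.log (Real.Gamma (s + 1))) :=
        Real.exp_le_exp.2 hcv
    _ = Real.Gamma s ^ (1 - a) * Real.Gamma (s + 1) ^ a := by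
        rw [Real.exp_add, Real.rpow_def_of_pos hΓs, Real.rpow_def_of_pos (by rw [hΓs1]; positivity),
          mul_comm (Real.log (Real.Gamma s)), mul_comm (Real.log (Real.Gamma (s+1)))]
    _ = Real.Gamma s * s ^ a := by
        rw [hΓs1, Real.mul_rpow hs.le hΓs.le, mul_left_comm, ← Real.rpow_add hΓs,
          sub_add_cancel, Real.rpow_one, mul_comm]

lemma summable_aux {a b y ξ : ℝ} (ha0 : 0 < a) (ha1 : a < 1) (hb : 0 < b) (hy : 0 < y)
    (hξ : 0 < ξ) :
    Summable (fun n : ℕ =>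
      y ^ n / (n.factorial : ℝ) * ((1/ξ) ^ (a * n + b) * Real.Gamma (a * n + b))) := by
  set g : ℕ → ℝ := fun n =>
    y ^ n / (n.factorial : ℝ) * ((1/ξ) ^ (a * n + b) * Real.Gamma (a * n + b)) with hg
  have hgpos : ∀ n, 0 < g n := by
    intro n
    have h1 : 0 < a * n + b := by positivity
    have := Real.Gamma_pos_of_pos h1
    positivity
  set C : ℝ := y * (1/ξ) ^ a * (a + b) ^ a with hC
  have hCpos : 0 < C := by positivity
  -- the ratio bound tends to 0
  have htend : Tendsto (fun n : ℕ => C * (n : ℝ) ^ (a - 1)) atTop (nhds 0) := by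
    have h0 : Tendsto (fun x : ℝ => x ^ (-(1 - a))) atTop (nhds 0) :=
      tendsto_rpow_neg_atTop (by linarith)
    have h1 : Tendsto (fun n : ℕ => ((n : ℝ)) ^ (a - 1)) atTop (nhds 0) := by
      have := h0.comp tendsto_natCast_atTop_atTop (α := ℕ)
      simpa [neg_sub, Function.comp_def] using this
    simpa using h1.const_mul C
  have hev : ∀ᶠ n : ℕ in atTop, C * (n : ℝ) ^ (a - 1) < 1/2 :=
    htend.eventually_lt_const (by norm_num)
  apply summable_of_ratio_norm_eventually_le (r := 1/2) (by norm_num)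
  filter_upwards [hev, eventually_ge_atTop 1] with n hn hn1
  have hnpos : (0:ℝ) < n := by exact_mod_cast hn1
  have hs : 0 < a * n + b := by positivity
  have hΓs : 0 < Real.Gamma (a * n + b) := Real.Gamma_pos_of_pos hs
  -- Gamma step
  have hkey : Real.Gamma (a * (n+1) + b) ≤ Real.Gamma (a * n + b) * (a * n + b) ^ a := by
    have := gamma_add_le ha0 ha1 hs
    have heq : a * ((n:ℝ)+1) + b = (a * (n:ℝ) + b) + a := by ring
    rw [heq]; exact this
  -- bound (a*n+b)^a ≤ (a+b)^a * n^a
  have hsb : (a * n + b) ^ a ≤ (a + b) ^ a * (n:ℝ) ^ a := by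
    rw [← Real.mul_rpow (by positivity) hnpos.le]
    apply Real.rpow_le_rpow hs.le _ ha0.le
    have : b * 1 ≤ b * n := by
      apply mul_le_mul_of_nonneg_left _ hb.le
      exact_mod_cast hn1
    nlinarith
  -- g (n+1) ≤ ratio * g n
  have hfact : ((n+1).factorial : ℝ) = (n+1) * n.factorial := by
    push_cast [Nat.factorial_succ]; ring
  have hrpow : (1/ξ) ^ (a * ((n:ℝ)+1) + b) = (1/ξ) ^ (a * n + b) * (1/ξ) ^ a := by
    rw [← Real.rpow_add (by positivity)]; ring_nf
  have hstep : g (n+1) ≤ (y * (1/ξ)^a * (a * n + b) ^ a / (n+1)) * g n := by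
    rw [hg]
    simp only
    push_cast
    rw [hfact, hrpow]
    have e1 : y ^ (n+1) = y * y ^ n := by ring
    rw [e1]
    calc y * y ^ n / ((n+1) * n.factorial) *
          ((1/ξ) ^ (a * n + b) * (1/ξ) ^ a * Real.Gamma (a * ((n:ℝ)+1) + b))
        ≤ y * y ^ n / ((n+1) * n.factorial) *
          ((1/ξ) ^ (a * n + b) * (1/ξ) ^ a * (Real.Gamma (a * n + b) * (a * n + b) ^ a)) := by
          apply mul_le_mul_of_nonneg_left _ (by positivity)
          apply mul_le_mul_of_nonneg_left _ (by positivity)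
          exact_mod_cast hkey
      _ = (y * (1/ξ)^a * (a * n + b) ^ a / ((n:ℝ)+1)) *
          (y ^ n / n.factorial * ((1/ξ) ^ (a * n + b) * Real.Gamma (a * n + b))) := by
          field_simp
  have hratio : y * (1/ξ)^a * (a * n + b) ^ a / ((n:ℝ)+1) ≤ C * (n:ℝ) ^ (a - 1) := by
    have h2 : y * (1/ξ)^a * (a * n + b) ^ a ≤ C * (n:ℝ) ^ a := by
      rw [hC, mul_assoc (y * (1/ξ)^a)]
      apply mul_le_mul_of_nonneg_left hsb (by positivity)
    have h3 : C * (n:ℝ) ^ a / ((n:ℝ)+1) ≤ C * (n:ℝ) ^ a / (n:ℝ) := by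
      apply div_le_div_of_nonneg_left (by positivity) hnpos (by linarith)
    calc y * (1/ξ)^a * (a * n + b) ^ a / ((n:ℝ)+1)
        ≤ C * (n:ℝ) ^ a / ((n:ℝ)+1) := by
          gcongr
      _ ≤ C * (n:ℝ) ^ a / (n:ℝ) := h3
      _ = C * (n:ℝ) ^ (a - 1) := by
          rw [Real.rpow_sub hnpos, Real.rpow_one, mul_div_assoc]
  have := (hgpos n).le
  have hfinal : g (n+1) ≤ 1/2 * g n := by
    calc g (n+1) ≤ (y * (1/ξ)^a * (a * n + b) ^ a / (n+1)) * g n := hstep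
      _ ≤ (C * (n:ℝ) ^ (a-1)) * g n := mul_le_mul_of_nonneg_right hratio (hgpos n).le
      _ ≤ 1/2 * g n := mul_le_mul_of_nonneg_right hn.le (hgpos n).le
  rw [Real.norm_of_nonneg (hgpos (n+1)).le, Real.norm_of_nonneg (hgpos n).le]
  exact hfinal

/-- Formula (1.12): for `0 < α < 1` and `β, y, ξ > 0`, the Laplace transform of
`Ψ_{α,β,y}(x) = x^{β-1} e^{-y x^α}` at `ξ` equals `ξ^{-β} 𝕃_{α,β}(y/ξ^α)`. -/
theorem stmt_19 (α β y ξ : ℝ) (hα0 : 0 < α) (hα1 : α < 1)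
    (hβ : 0 < β) (hy : 0 < y) (hξ : 0 < ξ) :
    ∫ x in Set.Ioi (0 : ℝ), x ^ (β - 1) * Real.exp (-y * x ^ α - ξ * x)
      = ξ ^ (-β) *
          ∑' n : ℕ, ((-1 : ℝ) ^ n * Real.Gamma (α * n + β) / (n.factorial : ℝ)) *
            (y / ξ ^ α) ^ n := by
  have hξα : 0 < ξ ^ α := Real.rpow_pos_of_pos hξ α
  set F : ℕ → ℝ → ℝ := fun n x =>
    ((-y) ^ n / (n.factorial : ℝ)) * (x ^ (α * n + β - 1) * Real.exp (-(ξ * x))) with hF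
  have hpos : ∀ n : ℕ, (0:ℝ) < α * n + β := by intro n; positivity
  have hInt : ∀ n : ℕ,
      IntegrableOn (fun x : ℝ => x ^ (α * n + β - 1) * Real.exp (-(ξ * x))) (Set.Ioi 0) := by
    intro n
    have hs : (-1:ℝ) < α * n + β - 1 := by have := hpos n; linarith
    have := integrableOn_rpow_mul_exp_neg_mul_rpow (p := 1) hs zero_lt_one hξ
    simpa [Real.rpow_one] using this
  have hFInt : ∀ n, Integrable (F n) (volume.restrict (Set.Ioi 0)) :=
    fun n => (hInt n).const_mul _
  have hval : ∀ n : ℕ, (∫ x in Set.Ioi (0:ℝ), x ^ (α * n + β - 1) * Real.exp (-(ξ * x)))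
      = (1/ξ) ^ (α * n + β) * Real.Gamma (α * n + β) :=
    fun n => Real.integral_rpow_mul_exp_neg_mul_Ioi (hpos n) hξ
  have hnorm : ∀ n : ℕ, (∫ x in Set.Ioi (0:ℝ), ‖F n x‖)
      = y ^ n / (n.factorial : ℝ) * ((1/ξ) ^ (α * n + β) * Real.Gamma (α * n + β)) := by
    intro n
    have hcong : ∀ x ∈ Set.Ioi (0:ℝ), ‖F n x‖
        = (y ^ n / (n.factorial : ℝ)) * (x ^ (α * n + β - 1) * Real.exp (-(ξ * x))) := by
      intro x hx
      have hx0 : (0:ℝ) < x := hx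
      have ht : (0:ℝ) ≤ x ^ (α * n + β - 1) * Real.exp (-(ξ * x)) := by positivity
      rw [hF]
      simp only [Real.norm_eq_abs, abs_mul, abs_div, abs_pow, abs_neg, abs_of_pos hy,
        abs_of_nonneg ht, Nat.abs_cast]
    rw [setIntegral_congr_fun measurableSet_Ioi hcong, integral_const_mul, hval n]
  have hsum : Summable (fun n : ℕ => ∫ x in Set.Ioi (0:ℝ), ‖F n x‖) :=
    (summable_aux hα0 hα1 hβ hy hξ).congr fun n => (hnorm n).symm
  have hswap := MeasureTheory.integral_tsum_of_summable_integral_norm hFInt hsum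
  have hFval : ∀ n : ℕ, (∫ x in Set.Ioi (0:ℝ), F n x)
      = ((-y) ^ n / (n.factorial : ℝ)) * ((1/ξ) ^ (α * n + β) * Real.Gamma (α * n + β)) := by
    intro n
    rw [hF]
    simp only
    rw [integral_const_mul, hval n]
  have hpt : ∀ x ∈ Set.Ioi (0:ℝ),
      x ^ (β - 1) * Real.exp (-y * x ^ α - ξ * x) = ∑' n : ℕ, F n x := by
    intro x hx
    have hx0 : (0:ℝ) < x := hx
    have h1 : ∀ n : ℕ, F n x
        = ((-(y * x ^ α)) ^ n / (n.factorial : ℝ)) * (x ^ (β - 1) * Real.exp (-(ξ * x))) := by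
      intro n
      rw [hF]
      simp only
      have hxp : x ^ (α * (n:ℝ) + β - 1) = (x ^ α) ^ n * x ^ (β - 1) := by
        rw [show α * (n:ℝ) + β - 1 = α * (n:ℝ) + (β - 1) by ring, Real.rpow_add hx0,
          Real.rpow_mul hx0.le, Real.rpow_natCast]
      rw [hxp, show -(y * x ^ α) = (-y) * x ^ α by ring, mul_pow]
      ring
    rw [tsum_congr h1, tsum_mul_right]
    have hexp : (∑' n : ℕ, (-(y * x ^ α)) ^ n / (n.factorial : ℝ))
        = Real.exp (-(y * x ^ α)) := by
      rw [Real.exp_eq_exp_ℝ, NormedSpace.exp_eq_tsum_div]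
    rw [hexp, show -y * x ^ α - ξ * x = -(y * x ^ α) + -(ξ * x) by ring, Real.exp_add]
    ring
  calc ∫ x in Set.Ioi (0:ℝ), x ^ (β - 1) * Real.exp (-y * x ^ α - ξ * x)
      = ∫ x in Set.Ioi (0:ℝ), ∑' n : ℕ, F n x :=
        setIntegral_congr_fun measurableSet_Ioi hpt
    _ = ∑' n : ℕ, ∫ x in Set.Ioi (0:ℝ), F n x := hswap.symm
    _ = ∑' n : ℕ, ξ ^ (-β) *
          (((-1 : ℝ) ^ n * Real.Gamma (α * n + β) / (n.factorial : ℝ)) * (y / ξ ^ α) ^ n) := by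
        refine tsum_congr fun n => ?_
        rw [hFval n]
        have e1 : (1/ξ : ℝ) ^ (α * (n:ℝ) + β) = ((1/ξ) ^ α) ^ n * (1/ξ) ^ β := by
          rw [Real.rpow_add (by positivity), Real.rpow_mul (by positivity), Real.rpow_natCast]
        have e2 : ((1/ξ : ℝ)) ^ α = (ξ ^ α)⁻¹ := by
          rw [one_div, Real.inv_rpow hξ.le]
        have e3 : (1/ξ : ℝ) ^ β = ξ ^ (-β) := by
          rw [one_div, Real.inv_rpow hξ.le, ← Real.rpow_neg hξ.le]
        have e4 : ((-y) : ℝ) ^ n = (-1 : ℝ) ^ n * y ^ n := by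
          rw [neg_pow]
        have hfn : ((n.factorial : ℝ)) ≠ 0 := by positivity
        rw [e1, e2, e3, e4, div_pow, inv_pow]
        have hξα' : ξ ^ α ≠ 0 := hξα.ne'
        field_simp
    _ = ξ ^ (-β) * ∑' n : ℕ,
          ((-1 : ℝ) ^ n * Real.Gamma (α * n + β) / (n.factorial : ℝ)) * (y / ξ ^ α) ^ n :=
        tsum_mul_left
end
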